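/- Every codimension-3 decoration (λ, μ) with k = ∑μⱼ satisfies λ₁ + μ₁ ≤ k + 1. -/

import Mathlib

/-- Sort a list of integers in non-increasing order. -/
def rsort (l : List ℤ) : List ℤ := List.insertionSort (· ≥ ·) l

/-- Remove all non-positive parts (trailing zeros) from a partition. -/
def strip (l : List ℤ) : List ℤ := l.filter (fun x => 0 < x)

/-- The smallest minimal link of a codimension-`c` pair of partitions `(λ, μ)`:
choose the `c` largest parts of `λ` (padding with zeros if needed), shift them by
`p = (c-2)k + 1 - (λ₁ + ⋯ + λ_c)` where `k = ∑ μⱼ`, merge with `μ` and re-sort;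
the other partition becomes `(λ_{c+1}, …, λ_b)`. -/
def smlink (c : ℕ) (P : List ℤ × List ℤ) : List ℤ × List ℤ :=
  let p : ℤ := ((c : ℤ) - 2) * P.2.sum + 1 - (P.1.take c).sum
  (strip (rsort ((P.1.take c ++ List.replicate (c - P.1.length) 0).map (· + p) ++ P.2)),
   strip (P.1.drop c))

/-- The smallest minimal link of `P` produces nonnegative parts, i.e. `λ_c + p ≥ 0`. -/
def ValidLink (c : ℕ) (P : List ℤ × List ℤ) : Prop :=
  0 ≤ P.1.getD (c - 1) 0 + (((c : ℤ) - 2) * P.2.sum + 1 - (P.1.take c).sum)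

/-- A partition: a non-increasing list of positive integers. -/
def IsPartition (l : List ℤ) : Prop := l.Pairwise (· ≥ ·) ∧ ∀ x ∈ l, 0 < x

/-- A codimension-`c` decoration: a pair of partitions reachable to the complete
intersection pair `((1^c), (1))` by finitely many smallest minimal links, all of
whose intermediate links are valid (have nonnegative parts). -/
def IsDecoration (c : ℕ) (P : List ℤ × List ℤ) : Prop :=
  IsPartition P.1 ∧ IsPartition P.2 ∧
  ∃ n : ℕ, (∀ m < n, ValidLink c ((smlink c)^[m] P)) ∧
    (smlink c)^[n] P = (List.replicate c 1, [1])

section helpers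
lemma rsort_sorted (l : List ℤ) : (rsort l).Pairwise (· ≥ ·) := List.pairwise_insertionSort _ l
lemma rsort_perm (l : List ℤ) : List.Perm (rsort l) l := List.perm_insertionSort _ l
lemma strip_sublist (l : List ℤ) : List.Sublist (strip l) l := List.filter_sublist
lemma strip_sorted {l : List ℤ} (h : l.Pairwise (· ≥ ·)) : (strip l).Pairwise (· ≥ ·) :=
  h.sublist (strip_sublist l)
lemma strip_pos {l : List ℤ} : ∀ x ∈ strip l, 0 < x := by
  intro x hx
  have := List.of_mem_filter hx
  simpa using this
lemma strip_eq_self {l : List ℤ} (h : ∀ x ∈ l, 0 < x) : strip l = l := by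
  apply List.filter_eq_self.2
  intro a ha; simpa using h a ha
lemma strip_sum {l : List ℤ} (h : ∀ x ∈ l, 0 ≤ x) : (strip l).sum = l.sum := by
  induction l with
  | nil => rfl
  | cons a t ih =>
    have ha := h a (by simp)
    have iht := ih (fun x hx => h x (by simp [hx]))
    rcases lt_or_eq_of_le ha with h1 | h1
    · simp [strip, List.filter_cons, h1] at iht ⊢; simpa [strip] using iht
    · simp [strip, List.filter_cons, ← h1] at iht ⊢; simpa [strip] using iht
lemma take3_sum (l : List ℤ) : (l.take 3).sum = l.getD 0 0 + l.getD 1 0 + l.getD 2 0 := by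
  rcases l with _ | ⟨a, _ | ⟨b, _ | ⟨c, t⟩⟩⟩ <;> simp <;> ring
lemma getD_nonneg {l : List ℤ} (h : ∀ x ∈ l, 0 < x) (i : ℕ) : 0 ≤ l.getD i 0 := by
  by_cases hi : i < l.length
  · rw [List.getD_eq_getElem l 0 hi]
    exact (h _ (List.getElem_mem hi)).le
  · rw [List.getD_eq_default l 0 (by omega)]
lemma mem_le_head {l : List ℤ} (h : l.Pairwise (· ≥ ·)) {x : ℤ} (hx : x ∈ l) :
    x ≤ l.getD 0 0 := by
  rcases l with _ | ⟨a, t⟩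
  · simp at hx
  · rcases List.mem_cons.1 hx with rfl | hx
    · simp
    · simpa using (List.rel_of_pairwise_cons h hx)
lemma pair_sublist_sum {l : List ℤ} (h : l.Pairwise (· ≥ ·)) :
    ∀ {a b : ℤ}, List.Sublist [a, b] l → a + b ≤ l.getD 0 0 + l.getD 1 0 := by
  induction l with
  | nil => intro a b hs; simp at hs
  | cons x t ih =>
    intro a b hs
    have hsx := h
    rw [List.pairwise_cons] at hsx
    cases hs with
    | cons _ hs =>
      have hab := ih hsx.2 hs
      have hlen : 2 ≤ t.length := hs.length_le
      rcases t with _ | ⟨c, _ | ⟨d, t'⟩⟩ <;> simp at hlen ⊢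
      have hc : x ≥ c := hsx.1 c (by simp)
      have hd : x ≥ d := hsx.1 d (by simp)
      simp at hab
      omega
    | cons_cons _ hs =>
      have hb : b ∈ t := hs.mem (by simp)
      have hxb : x ≥ b := hsx.1 b hb
      rcases t with _ | ⟨c, t'⟩
      · simp at hb
      · have hbc : b ≤ c := by
          rcases List.mem_cons.1 hb with rfl | hb'
          · exact le_refl _
          · have := hsx.2; rw [List.pairwise_cons] at this
            exact this.1 b hb'
        simp
        omega
lemma perm_pair {l : List ℤ} {a b : ℤ} (h : List.Perm l [a, b]) :
    l = [a, b] ∨ l = [b, a] := by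
  have hlen : l.length = 2 := by simpa using h.length_eq
  rcases l with _ | ⟨c, _ | ⟨d, _ | t⟩⟩ <;> simp at hlen
  have hc : c ∈ [a, b] := h.mem_iff.1 (by simp)
  rcases List.mem_cons.1 hc with rfl | hc'
  · left
    have : List.Perm [d] [b] := (List.perm_cons c).1 h
    simp [List.perm_singleton.1 this]
  · right
    simp at hc'
    subst hc'
    have h2 : List.Perm [c, d] [c, a] := h.trans (List.Perm.swap _ _ _)
    have : List.Perm [d] [a] := (List.perm_cons c).1 h2
    simp [List.perm_singleton.1 this]
lemma pair_subperm_sum {l : List ℤ} (h : l.Pairwise (· ≥ ·)) {a b : ℤ}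
    (hs : List.Subperm [a, b] l) : a + b ≤ l.getD 0 0 + l.getD 1 0 := by
  obtain ⟨l', hp, hsub⟩ := hs
  rcases perm_pair hp with rfl | rfl
  · exact pair_sublist_sum h hsub
  · have := pair_sublist_sum h hsub; omega
lemma map_add_sum (l : List ℤ) (p : ℤ) :
    (l.map (· + p)).sum = l.sum + l.length * p := by
  induction l with
  | nil => simp
  | cons a t ih => simp [ih]; ring
end helpers

section smlink3
lemma smlink3_fst (P : List ℤ × List ℤ) :
    (smlink 3 P).1 = strip (rsort ((P.1.take 3 ++ List.replicate (3 - P.1.length) 0).map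
      (· + (P.2.sum + 1 - (P.1.take 3).sum)) ++ P.2)) := by
  simp [smlink]
lemma smlink3_snd (P : List ℤ × List ℤ) : (smlink 3 P).2 = strip (P.1.drop 3) := rfl
lemma validlink3 (P : List ℤ × List ℤ) (h : ValidLink 3 P) :
    0 ≤ P.1.getD 2 0 + (P.2.sum + 1 - (P.1.take 3).sum) := by
  have := h
  unfold ValidLink at this
  norm_num at this
  rw [List.getD_eq_getElem?_getD]
  convert this using 2
lemma smlink_partition (c : ℕ) (P : List ℤ × List ℤ) (h1 : IsPartition P.1) :
    IsPartition (smlink c P).1 ∧ IsPartition (smlink c P).2 := by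
  constructor
  · exact ⟨strip_sorted (rsort_sorted _), strip_pos⟩
  · exact ⟨strip_sorted (List.Pairwise.drop h1.1), strip_pos⟩
lemma iterate_partition (c : ℕ) (P : List ℤ × List ℤ) (h1 : IsPartition P.1)
    (h2 : IsPartition P.2) (m : ℕ) :
    IsPartition ((smlink c)^[m] P).1 ∧ IsPartition ((smlink c)^[m] P).2 := by
  induction m with
  | zero => exact ⟨h1, h2⟩
  | succ m ih =>
    rw [Function.iterate_succ_apply']
    exact smlink_partition c _ ih.1
lemma take3_pad_ge {l : List ℤ} (h : IsPartition l) :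
    ∀ x ∈ l.take 3 ++ List.replicate (3 - l.length) 0, l.getD 2 0 ≤ x := by
  intro x hx
  rcases List.mem_append.1 hx with hx | hx
  · obtain ⟨i, hi, hx⟩ := List.mem_iff_getElem.1 hx
    rw [List.length_take] at hi
    have hil : i < l.length := lt_of_lt_of_le hi (by omega)
    have hxval : x = l[i] := by rw [← hx]; simp [List.getElem_take]
    by_cases h3 : 2 < l.length
    · rw [List.getD_eq_getElem l 0 h3]
      subst hxval
      rcases Nat.lt_or_ge i 2 with hi2 | hi2
      · exact h.1.rel_get_of_lt (by simpa using hi2)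
      · have : i = 2 := by omega
        subst this; exact le_refl _
    · rw [List.getD_eq_default l 0 (by omega)]
      exact (h.2 x (hxval ▸ List.getElem_mem hil)).le
  · have hlen : l.length < 3 := by
      by_contra hc
      simp [Nat.sub_eq_zero_of_le (by omega : 3 ≤ l.length)] at hx
    have hx0 : x = 0 := List.eq_of_mem_replicate hx
    rw [List.getD_eq_default l 0 (by omega), hx0]
lemma smlink3_snd_sum (P : List ℤ × List ℤ) (h1 : IsPartition P.1) :
    (smlink 3 P).2.sum = P.1.sum - (P.1.take 3).sum := by
  rw [smlink3_snd, strip_eq_self (fun x hx => h1.2 x (List.mem_of_mem_drop hx))]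
  have := List.sum_take_add_sum_drop P.1 3
  omega
lemma smlink3_fst_sum (P : List ℤ × List ℤ) (h1 : IsPartition P.1) (h2 : IsPartition P.2)
    (hv : ValidLink 3 P) :
    (smlink 3 P).1.sum = (P.1.take 3).sum + 3 * (P.2.sum + 1 - (P.1.take 3).sum) + P.2.sum := by
  set p : ℤ := P.2.sum + 1 - (P.1.take 3).sum with hp
  have hv3 := validlink3 P hv
  rw [smlink3_fst]
  rw [strip_sum, (rsort_perm _).sum_eq]
  · have hlen : (P.1.take 3 ++ List.replicate (3 - P.1.length) 0).length = 3 := by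
      simp [List.length_take, List.length_replicate]
      omega
    rw [List.sum_append, map_add_sum, hlen, List.sum_append, List.sum_replicate]
    simp
    exact hp.symm
  · intro x hx
    have hx' : x ∈ rsort ((P.1.take 3 ++ List.replicate (3 - P.1.length) 0).map (· + p) ++ P.2) := hx
    rw [(rsort_perm _).mem_iff] at hx'
    rcases List.mem_append.1 hx' with hx' | hx'
    · obtain ⟨y, hy, rfl⟩ := List.mem_map.1 hx'
      have := take3_pad_ge h1 y hy
      omega
    · exact (h2.2 x hx').le
lemma sum_invariant : ∀ n (P : List ℤ × List ℤ), IsPartition P.1 → IsPartition P.2 →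
    (∀ m < n, ValidLink 3 ((smlink 3)^[m] P)) →
    (smlink 3)^[n] P = (List.replicate 3 1, [1]) →
    P.1.sum = 2 * P.2.sum + 1 := by
  intro n
  induction n with
  | zero =>
    intro P _ _ _ hfin
    simp at hfin
    rw [hfin]
    decide
  | succ n ih =>
    intro P h1 h2 hval hfin
    have hv0 : ValidLink 3 P := by
      have := hval 0 (by omega)
      simpa using this
    have hQpart := smlink_partition 3 P h1
    have hIH := ih (smlink 3 P) hQpart.1 hQpart.2
      (fun m hm => by
        rw [← Function.iterate_succ_apply]
        exact hval (m + 1) (by omega))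
      (by rw [← Function.iterate_succ_apply]; exact hfin)
    have ha := smlink3_fst_sum P h1 h2 hv0
    have hb := smlink3_snd_sum P h1
    rw [ha, hb] at hIH
    linarith
end smlink3

/-- Every codimension-3 decoration `(λ, μ)` with `k = ∑μⱼ` satisfies
`λ₁ + μ₁ ≤ k + 1`. -/


theorem stmt4 (P : List ℤ × List ℤ) (k : ℤ) (hk : P.2.sum = k)
    (h : IsDecoration 3 P) :
    P.1.getD 0 0 + P.2.getD 0 0 ≤ k + 1 := by
  obtain ⟨hP1, hP2, n, hval, hfin⟩ := h
  subst hk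
  rcases n with _ | n'
  · simp at hfin
    rw [hfin]
    decide
  -- n = n' + 1
  have hS : P.1.sum = 2 * P.2.sum + 1 :=
    sum_invariant (n' + 1) P hP1 hP2 hval hfin
  have hv0 : ValidLink 3 P := by
    have := hval 0 (by omega); simpa using this
  have hv3 := validlink3 P hv0
  rw [take3_sum] at hv3
  set k := P.2.sum with hkdef
  have hknn : 0 ≤ k := List.sum_nonneg (fun x hx => (hP2.2 x hx).le)
  -- the star inequality at Q = smlink 3 P
  set Q := smlink 3 P with hQ
  have hQ1pos : ∀ x ∈ Q.1, 0 < x := by rw [hQ, smlink3_fst]; exact strip_pos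
  have hstar : Q.1.getD 0 0 + Q.1.getD 1 0 ≤ Q.2.sum + 1 := by
    rcases n' with _ | n''
    · have hQb : smlink 3 P = (List.replicate 3 1, [1]) := by simpa using hfin
      rw [hQ, hQb]
      decide
    · have hv1 : ValidLink 3 Q := by
        have := hval 1 (by omega)
        simpa using this
      have := validlink3 Q hv1
      rw [take3_sum] at this
      have h2nn : 0 ≤ Q.1.getD 2 0 := getD_nonneg hQ1pos 2
      omega
  have hQ2sum : Q.2.sum = P.1.sum - (P.1.take 3).sum := smlink3_snd_sum P hP1
  rw [take3_sum] at hQ2sum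
  rcases hP2' : P.2 with _ | ⟨m1, mt⟩
  · -- μ empty : k = 0
    have hk0 : k = 0 := by rw [hkdef, hP2']; simp
    have h1nn : 0 ≤ P.1.getD 1 0 := getD_nonneg hP1.2 1
    simp only [List.getD_nil]
    omega
  · have hm1pos : 0 < m1 := hP2.2 m1 (by rw [hP2']; simp)
    -- λ nonempty
    rcases hP1' : P.1 with _ | ⟨l1, lt⟩
    · rw [hP1'] at hS; simp at hS; omega
    set p : ℤ := P.2.sum + 1 - (P.1.take 3).sum with hpdef
    -- Q.1 as permutation of strip L
    set L : List ℤ := (P.1.take 3 ++ List.replicate (3 - P.1.length) 0).map (· + p) ++ P.2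
      with hLdef
    have hQ1 : Q.1 = strip (rsort L) := by rw [hQ, smlink3_fst]
    have hQ1perm : List.Perm Q.1 (strip L) := by
      rw [hQ1]
      exact (rsort_perm L).filter _
    have hQ1sorted : Q.1.Pairwise (· ≥ ·) := by rw [hQ1]; exact strip_sorted (rsort_sorted _)
    have hm1memL : m1 ∈ L := by
      rw [hLdef]
      exact List.mem_append.2 (Or.inr (by rw [hP2']; simp))
    have hm1memQ : m1 ∈ Q.1 := by
      rw [hQ1perm.mem_iff]
      exact List.mem_filter.2 ⟨hm1memL, by simpa using hm1pos⟩
    have hgoal : P.1.getD 0 0 = l1 := by rw [hP1']; rfl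
    have hgoal2 : P.2.getD 0 0 = m1 := by rw [hP2']; rfl
    rw [List.getD_cons_zero, List.getD_cons_zero]
    by_cases hlp : 0 < l1 + p
    · -- subperm [l1+p, m1] of Q.1
      have hLform : L = (l1 + p) :: ((lt.take 2 ++ List.replicate (3 - P.1.length) 0).map
          (· + p) ++ (m1 :: mt)) := by
        rw [hLdef, hP1', hP2']
        simp [List.take_succ_cons]
      have hperm2 : List.Perm L ((l1 + p) :: m1 ::
          ((lt.take 2 ++ List.replicate (3 - P.1.length) 0).map (· + p) ++ mt)) := by
        rw [hLform]
        exact List.Perm.cons _ (List.perm_middle)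
      have hsubperm : List.Subperm [l1 + p, m1] Q.1 := by
        have h1 : List.Perm (strip L) ((l1 + p) :: m1 ::
            strip ((lt.take 2 ++ List.replicate (3 - P.1.length) 0).map (· + p) ++ mt)) := by
          have := hperm2.filter (fun x => decide (0 < x))
          rw [List.filter_cons, List.filter_cons] at this
          simpa [strip, hlp, hm1pos] using this
        have hsub : List.Sublist [l1 + p, m1] ((l1 + p) :: m1 ::
            strip ((lt.take 2 ++ List.replicate (3 - P.1.length) 0).map (· + p) ++ mt)) :=
          ((List.nil_sublist _).cons₂ _).cons₂ _
        exact hsub.subperm.trans (h1.symm.trans hQ1perm.symm).subperm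
      have hpair := pair_subperm_sum hQ1sorted hsubperm
      rw [take3_sum] at hpdef
      omega
    · -- l1 + p ≤ 0
      push_neg at hlp
      have hm1le := mem_le_head hQ1sorted hm1memQ
      have h1nn : 0 ≤ Q.1.getD 1 0 := getD_nonneg hQ1pos 1
      rw [take3_sum] at hpdef
      omega
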